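/- Theorem 1 (RASMs certify probabilistic reach-avoid): Consider a discrete-time stochastic dynamical system on a compact Borel set 𝒳 ⊆ ℝ^m given by a Borel-measurable dynamics function f : ℝ^m × ℝ^n × ℝ^p → ℝ^m, a Borel-measurable control policy π : ℝ^m → ℝ^n, and a probability distribution d on ℝ^p, with f(x, π(x), w) ∈ 𝒳 whenever x ∈ 𝒳 and w lies in the support of d. Let 𝒳₀ ⊆ 𝒳 be a Borel set of initial states, and let 𝒳_t, 𝒳_u ⊆ 𝒳 be disjoint Borel target and unsafe sets. Fix p ∈ [0,1). On a probability space (Ω, ℱ, ℙ), let (ω_t)_{t∈ℕ} be an independent sequence of ℝ^p-valued random variables each with law d, fix x₀ ∈ 𝒳₀, and define the trajectory process (x_t)_{t∈ℕ} by x_{t+1} = f(x_t, π(x_t), ω_t). If there exists a continuous function V : 𝒳 → ℝ that is a reach-avoid supermartingale (RASM) with respect to 𝒳_t, 𝒳_u and p, then ℙ[ ∃ t ∈ ℕ : x_t ∈ 𝒳_t and x_{t'} ∉ 𝒳_u for all t' ≤ t ] ≥ p. -/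

import Mathlib

open MeasureTheory ProbabilityTheory

/-- The (topological) support of a measure: the set of points all of whose open
neighbourhoods have positive measure. -/
def measureSupport {E : Type*} [TopologicalSpace E] [MeasurableSpace E]
    (d : Measure E) : Set E :=
  {w | ∀ U : Set E, IsOpen U → w ∈ U → 0 < d U}

private lemma isClosed_measureSupport {E : Type*} [TopologicalSpace E] [MeasurableSpace E]
    (d : Measure E) : IsClosed (measureSupport d) := by
  rw [← isOpen_compl_iff, isOpen_iff_forall_mem_open]
  intro w hw
  simp only [measureSupport, Set.mem_compl_iff, Set.mem_setOf_eq, not_forall] at hw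
  obtain ⟨U, hU, hwU, hd⟩ := hw
  refine ⟨U, fun w' hw' h' => hd (h' U hU hw'), hU, hwU⟩

private lemma measureSupport_compl_null {E : Type*} [TopologicalSpace E] [MeasurableSpace E]
    [SecondCountableTopology E] (d : Measure E) : d (measureSupport d)ᶜ = 0 := by
  obtain ⟨b, hbc, -, hb⟩ := TopologicalSpace.exists_countable_basis E
  have hsub : (measureSupport d)ᶜ ⊆ ⋃₀ {U | U ∈ b ∧ d U = 0} := by
    intro w hw
    simp only [measureSupport, Set.mem_compl_iff, Set.mem_setOf_eq, not_forall] at hw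
    obtain ⟨U, hU, hwU, hd⟩ := hw
    have hd0 : d U = 0 := by simpa [pos_iff_ne_zero] using hd
    obtain ⟨V, hVb, hwV, hVU⟩ := hb.mem_nhds_iff.mp (hU.mem_nhds hwU)
    exact ⟨V, ⟨hVb, le_antisymm (hd0 ▸ measure_mono hVU) zero_le⟩, hwV⟩
  refine measure_mono_null hsub ((measure_sUnion_null_iff (hbc.mono (by intro x hx; exact hx.1))).2 ?_)
  exact fun U hU => hU.2

private lemma measurable_comp_of_continuousOn {α : Type*} [MeasurableSpace α]
    {X : Type*} [TopologicalSpace X] [MeasurableSpace X] [OpensMeasurableSpace X]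
    {𝒳 : Set X} {V : X → ℝ} (hV : ContinuousOn V 𝒳)
    {g : α → X} (hg : Measurable g) (hmem : ∀ a, g a ∈ 𝒳) :
    Measurable fun a => V (g a) := by
  have h1 : Continuous fun x : 𝒳 => V x := continuousOn_iff_continuous_restrict.mp hV
  have h2 : Measurable fun a => (⟨g a, hmem a⟩ : 𝒳) := hg.subtype_mk
  exact h1.measurable.comp h2

/-- Auxiliary trajectory using a projection `pr` on noise values. -/
private def rasmTraj {Ω X U W : Type*} (f : X → U → W → X) (π : X → U)
    (pr : W → W) (ω : ℕ → Ω → W) (x₀ : X) : ℕ → Ω → X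
  | 0 => fun _ => x₀
  | t+1 => fun ϖ =>
      f (rasmTraj f π pr ω x₀ t ϖ) (π (rasmTraj f π pr ω x₀ t ϖ)) (pr (ω t ϖ))

/-- Value of the auxiliary trajectory as a function of the noise prefix. -/
private def rasmPhi {X U W : Type*} (f : X → U → W → X) (π : X → U)
    (pr : W → W) (x₀ : X) : (t : ℕ) → (Fin t → W) → X
  | 0, _ => x₀
  | t+1, ws =>
      f (rasmPhi f π pr x₀ t (ws ∘ Fin.castSucc))
        (π (rasmPhi f π pr x₀ t (ws ∘ Fin.castSucc))) (pr (ws (Fin.last t)))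

open Classical in
/-- The stopped value process. -/
private noncomputable def rasmY {Ω X : Type*} (V : X → ℝ) (tr : ℕ → Ω → X)
    (N : ℕ → Set Ω) : ℕ → Ω → ℝ
  | 0 => fun ϖ => V (tr 0 ϖ)
  | t+1 => fun ϖ => if ϖ ∈ N t then V (tr (t+1) ϖ) else rasmY V tr N t ϖ

private lemma rasmTraj_eq_phi {Ω X U W : Type*} (f : X → U → W → X) (π : X → U)
    (pr : W → W) (ω : ℕ → Ω → W) (x₀ : X) (t : ℕ) (ϖ : Ω) :
    rasmTraj f π pr ω x₀ t ϖ = rasmPhi f π pr x₀ t (fun i : Fin t => ω i ϖ) := by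
  induction t with
  | zero => rfl
  | succ t ih =>
      show f _ (π _) _ = f _ (π _) _
      have h1 : ((fun i : Fin (t+1) => ω i ϖ) ∘ Fin.castSucc) = fun i : Fin t => ω i ϖ := by
        funext i; simp
      rw [h1, ← ih]
      simp [Fin.last]
/-- Theorem 1: a reach-avoid supermartingale (RASM) `V` with respect to the target set `Xt`,
the unsafe set `Xu` and the probability threshold `p ∈ [0,1)` certifies that the trajectory
process started at any initial state `x₀ ∈ X0` reaches `Xt` while avoiding `Xu` with
probability at least `p`. -/
theorem rasm_certifies_probabilistic_reach_avoid
    {m n q : ℕ}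
    (𝒳 : Set (Fin m → ℝ)) (hXcpt : IsCompact 𝒳) (hXmeas : MeasurableSet 𝒳)
    (f : (Fin m → ℝ) → (Fin n → ℝ) → (Fin q → ℝ) → (Fin m → ℝ))
    (hf : Measurable fun xuw : (Fin m → ℝ) × (Fin n → ℝ) × (Fin q → ℝ) =>
      f xuw.1 xuw.2.1 xuw.2.2)
    (π : (Fin m → ℝ) → (Fin n → ℝ)) (hπ : Measurable π)
    (d : Measure (Fin q → ℝ)) [IsProbabilityMeasure d]
    (hinv : ∀ x ∈ 𝒳, ∀ w ∈ measureSupport d, f x (π x) w ∈ 𝒳)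
    (X0 Xt Xu : Set (Fin m → ℝ))
    (hX0sub : X0 ⊆ 𝒳) (hXtsub : Xt ⊆ 𝒳) (hXusub : Xu ⊆ 𝒳)
    (hX0meas : MeasurableSet X0) (hXtmeas : MeasurableSet Xt) (hXumeas : MeasurableSet Xu)
    (hdisj : Disjoint Xt Xu)
    (p : ℝ) (hp0 : 0 ≤ p) (hp1 : p < 1)
    {Ω : Type*} {m0 : MeasurableSpace Ω} (μ : Measure Ω) [IsProbabilityMeasure μ]
    (ω : ℕ → Ω → (Fin q → ℝ))
    (hωmeas : ∀ t, Measurable (ω t))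
    (hωindep : iIndepFun ω μ)
    (hωlaw : ∀ t, μ.map (ω t) = d)
    (x₀ : Fin m → ℝ) (hx₀ : x₀ ∈ X0)
    (traj : ℕ → Ω → (Fin m → ℝ))
    (htraj0 : ∀ ϖ, traj 0 ϖ = x₀)
    (htraj : ∀ t ϖ, traj (t + 1) ϖ = f (traj t ϖ) (π (traj t ϖ)) (ω t ϖ))
    (V : (Fin m → ℝ) → ℝ) (hVcont : ContinuousOn V 𝒳)
    (hVnonneg : ∀ x ∈ 𝒳, 0 ≤ V x)
    (hVinit : ∀ x ∈ X0, V x ≤ 1)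
    (hVunsafe : ∀ x ∈ Xu, 1 / (1 - p) ≤ V x)
    (hVdec : ∃ ε > 0, ∀ x ∈ 𝒳 \ Xt, V x ≤ 1 / (1 - p) →
      ∫ w, V (f x (π x) w) ∂d ≤ V x - ε) :
    ENNReal.ofReal p
      ≤ μ {ϖ | ∃ t : ℕ, traj t ϖ ∈ Xt ∧ ∀ t' ≤ t, traj t' ϖ ∉ Xu} := by
  classical
  obtain ⟨ε, hε, hVdec⟩ := hVdec
  set S : Set (Fin q → ℝ) := measureSupport d with hSdef
  have hScl : IsClosed S := isClosed_measureSupport d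
  have hSm : MeasurableSet S := hScl.measurableSet
  have hSc0 : d Sᶜ = 0 := measureSupport_compl_null d
  have hSne : S.Nonempty := by
    by_contra h
    rw [Set.not_nonempty_iff_eq_empty] at h
    have h2 : d Set.univ = 0 := by rw [← Set.compl_empty, ← h]; exact hSc0
    simp at h2
  obtain ⟨w₀, hw₀⟩ := hSne
  set pr : (Fin q → ℝ) → (Fin q → ℝ) := fun w => if w ∈ S then w else w₀ with hprdef
  have hprS : ∀ w, pr w ∈ S := fun w => by
    by_cases h : w ∈ S <;> simp [hprdef, h, hw₀]
  have hprid : ∀ w ∈ S, pr w = w := fun w h => by simp [hprdef, h]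
  have hprmeas : Measurable pr := Measurable.ite hSm measurable_id measurable_const
  have hx₀X : x₀ ∈ 𝒳 := hX0sub hx₀
  have h1p : 0 < 1 - p := by linarith
  set thr : ℝ := 1 / (1 - p) with hthrdef
  have hthrpos : 0 < thr := by rw [hthrdef]; positivity
  set φ : (t : ℕ) → (Fin t → (Fin q → ℝ)) → (Fin m → ℝ) := rasmPhi f π pr x₀ with hφdef
  set tr : ℕ → Ω → (Fin m → ℝ) := rasmTraj f π pr ω x₀ with htrdef
  have hφmem : ∀ t ws, φ t ws ∈ 𝒳 := by
    intro t
    induction t with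
    | zero => intro ws; exact hx₀X
    | succ t ih => intro ws; exact hinv _ (ih _) _ (hprS _)
  have hφmeas : ∀ t, Measurable (φ t) := by
    intro t
    induction t with
    | zero => exact measurable_const
    | succ t ih =>
        have h1 : Measurable fun ws : Fin (t+1) → (Fin q → ℝ) => ws ∘ Fin.castSucc :=
          measurable_pi_lambda _ fun i => measurable_pi_apply _
        have h2 : Measurable fun ws : Fin (t+1) → (Fin q → ℝ) => φ t (ws ∘ Fin.castSucc) :=
          ih.comp h1
        exact hf.comp (h2.prodMk ((hπ.comp h2).prodMk
          (hprmeas.comp (measurable_pi_apply (Fin.last t)))))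
  have htrphi : ∀ t ϖ, tr t ϖ = φ t (fun i : Fin t => ω i ϖ) :=
    fun t ϖ => rasmTraj_eq_phi f π pr ω x₀ t ϖ
  have htrmem : ∀ t ϖ, tr t ϖ ∈ 𝒳 := fun t ϖ => (htrphi t ϖ) ▸ hφmem t _
  have htrmeas : ∀ t, Measurable (tr t) := by
    intro t
    have : tr t = fun ϖ => φ t (fun i : Fin t => ω i ϖ) := funext (htrphi t)
    rw [this]
    exact (hφmeas t).comp (measurable_pi_lambda _ fun i => hωmeas i)
  obtain ⟨C, hC⟩ := hXcpt.exists_bound_of_continuousOn hVcont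
  have hVtrmeas : ∀ t, Measurable fun ϖ => V (tr t ϖ) := fun t =>
    measurable_comp_of_continuousOn hVcont (htrmeas t) (htrmem t)
  set N : ℕ → Set Ω := fun t => {ϖ | ∀ s ≤ t, tr s ϖ ∉ Xt ∧ V (tr s ϖ) < thr} with hNdef
  have hNmeas : ∀ t, MeasurableSet (N t) := by
    intro t
    have : N t = ⋂ (s : ℕ) (_ : s ≤ t),
        ((tr s ⁻¹' Xt)ᶜ ∩ {ϖ | V (tr s ϖ) < thr}) := by
      ext ϖ; simp only [hNdef, Set.mem_setOf_eq, Set.mem_iInter, Set.mem_inter_iff,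
        Set.mem_compl_iff, Set.mem_preimage]
    rw [this]
    refine MeasurableSet.iInter fun s => MeasurableSet.iInter fun _ => ?_
    exact ((htrmeas s hXtmeas).compl).inter (measurableSet_lt (hVtrmeas s) measurable_const)
  have hNanti : ∀ ⦃s t : ℕ⦄, s ≤ t → N t ⊆ N s := by
    intro s t hst ϖ hϖ r hr
    exact hϖ r (hr.trans hst)
  set Y : ℕ → Ω → ℝ := rasmY V tr N with hYdef
  have hY0 : ∀ ϖ, Y 0 ϖ = V x₀ := by intro ϖ; simp [hYdef, rasmY, htrdef, rasmTraj]
  have hYsucc : ∀ t ϖ, Y (t+1) ϖ = if ϖ ∈ N t then V (tr (t+1) ϖ) else Y t ϖ := by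
    intro t ϖ; simp [hYdef, rasmY]
  have hYmeas : ∀ t, Measurable (Y t) := by
    intro t
    induction t with
    | zero => rw [funext hY0]; exact measurable_const
    | succ t ih =>
        have : Y (t+1) = (N t).piecewise (fun ϖ => V (tr (t+1) ϖ)) (Y t) := by
          funext ϖ; rw [hYsucc]; rfl
        rw [this]
        exact Measurable.piecewise (hNmeas t) (hVtrmeas (t+1)) ih
  have hYform : ∀ t ϖ, ∃ s, Y t ϖ = V (tr s ϖ) := by
    intro t
    induction t with
    | zero => exact fun ϖ => ⟨0, by simp [hYdef, rasmY]⟩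
    | succ t ih =>
        intro ϖ
        rw [hYsucc]
        by_cases h : ϖ ∈ N t
        · exact ⟨t+1, by rw [if_pos h]⟩
        · obtain ⟨s, hs⟩ := ih ϖ; exact ⟨s, by rw [if_neg h]; exact hs⟩
  have hYnonneg : ∀ t ϖ, 0 ≤ Y t ϖ := by
    intro t ϖ; obtain ⟨s, hs⟩ := hYform t ϖ; rw [hs]; exact hVnonneg _ (htrmem s ϖ)
  have hYbdd : ∀ t ϖ, ‖Y t ϖ‖ ≤ C := by
    intro t ϖ; obtain ⟨s, hs⟩ := hYform t ϖ; rw [hs]; exact hC _ (htrmem s ϖ)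
  have hbdd_int : ∀ (g : Ω → ℝ) (D : ℝ), Measurable g → (∀ ϖ, ‖g ϖ‖ ≤ D) → Integrable g μ := by
    intro g D hg hD
    exact (integrable_const D).mono' hg.aestronglyMeasurable (Filter.Eventually.of_forall hD)
  have hYint : ∀ t, Integrable (Y t) μ := fun t => hbdd_int _ C (hYmeas t) (hYbdd t)
  have hYonN : ∀ t ϖ, ϖ ∈ N t → Y t ϖ = V (tr t ϖ) := by
    intro t
    cases t with
    | zero => intro ϖ _; simp [hYdef, rasmY]
    | succ t => intro ϖ h; rw [hYsucc, if_pos (hNanti (Nat.le_succ t) h)]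
  -- the key supermartingale step
  have hC0 : 0 ≤ C := le_trans (norm_nonneg _) (hC _ hx₀X)
  have htrsucc : ∀ t ϖ, tr (t+1) ϖ = f (tr t ϖ) (π (tr t ϖ)) (pr (ω t ϖ)) := by
    intro t ϖ; simp [htrdef, rasmTraj]
  have hdae : ∀ᵐ w ∂d, w ∈ S := by
    rw [MeasureTheory.ae_iff]; exact hSc0
  have hkey : ∀ t, ∫ ϖ, (N t).indicator (fun ϖ => V (tr (t+1) ϖ)) ϖ ∂μ
      ≤ ∫ ϖ, (N t).indicator (fun ϖ => V (tr t ϖ) - ε) ϖ ∂μ := by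
    intro t
    set P : Ω → (Fin t → (Fin q → ℝ)) := fun ϖ i => ω i ϖ with hPdef
    have hPmeas : Measurable P := measurable_pi_lambda _ fun i => hωmeas i
    have hIndep : IndepFun P (ω t) μ := by
      have h := hωindep.indepFun_finset (Finset.range t) {t}
        (by simp only [Finset.disjoint_left, Finset.mem_range, Finset.mem_singleton]; omega) hωmeas
      have hφ1 : Measurable fun v : (i : (Finset.range t : Finset ℕ)) → (Fin q → ℝ) =>
          (fun j : Fin t => v ⟨(j : ℕ), Finset.mem_range.mpr j.isLt⟩) :=
        measurable_pi_lambda _ fun j => measurable_pi_apply _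
      have hφ2 : Measurable fun v : (i : ({t} : Finset ℕ)) → (Fin q → ℝ) =>
          v ⟨t, Finset.mem_singleton_self t⟩ := measurable_pi_apply _
      exact h.comp hφ1 hφ2
    have hpairmeas : Measurable fun ϖ => (P ϖ, ω t ϖ) := hPmeas.prodMk (hωmeas t)
    have hmap : μ.map (fun ϖ => (P ϖ, ω t ϖ)) = (μ.map P).prod d := by
      rw [← hωlaw t]
      exact (indepFun_iff_map_prod_eq_prod_map_map hPmeas.aemeasurable
        (hωmeas t).aemeasurable).mp hIndep
    haveI : IsProbabilityMeasure (μ.map P) := Measure.isProbabilityMeasure_map hPmeas.aemeasurable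
    set B : Set (Fin t → (Fin q → ℝ)) :=
      {ws | ∀ (s : ℕ) (h : s ≤ t), φ s (fun i : Fin s => ws (Fin.castLE h i)) ∉ Xt ∧
        V (φ s (fun i : Fin s => ws (Fin.castLE h i))) < thr} with hBdef
    have hrestrict : ∀ (s : ℕ) (h : s ≤ t) (ϖ : Ω),
        φ s (fun i : Fin s => (P ϖ) (Fin.castLE h i)) = tr s ϖ := by
      intro s h ϖ
      rw [htrphi s ϖ]
      congr 1
    have hmemB : ∀ ϖ, P ϖ ∈ B ↔ ϖ ∈ N t := by
      intro ϖ
      simp only [hBdef, hNdef, Set.mem_setOf_eq]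
      constructor
      · intro h s hs; have h2 := h s hs; rwa [hrestrict s hs ϖ] at h2
      · intro h s hs; rw [hrestrict s hs ϖ]; exact h s hs
    have hφres_meas : ∀ (s : ℕ) (h : s ≤ t),
        Measurable fun ws : Fin t → (Fin q → ℝ) => φ s (fun i : Fin s => ws (Fin.castLE h i)) :=
      fun s h => (hφmeas s).comp (measurable_pi_lambda _ fun i => measurable_pi_apply _)
    have hBmeas : MeasurableSet B := by
      have hBeq : B = ⋂ (s : ℕ) (h : s ≤ t),
          ({ws | φ s (fun i : Fin s => ws (Fin.castLE h i)) ∈ Xt}ᶜ ∩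
           {ws | V (φ s (fun i : Fin s => ws (Fin.castLE h i))) < thr}) := by
        ext ws
        simp only [hBdef, Set.mem_setOf_eq, Set.mem_iInter, Set.mem_inter_iff,
          Set.mem_compl_iff]
      rw [hBeq]
      refine MeasurableSet.iInter fun s => MeasurableSet.iInter fun h => ?_
      exact ((hφres_meas s h) hXtmeas).compl.inter
        (measurableSet_lt (measurable_comp_of_continuousOn hVcont (hφres_meas s h)
          (fun ws => hφmem s _)) measurable_const)
    have hBt : ∀ ws ∈ B, φ t ws ∉ Xt ∧ V (φ t ws) < thr := by
      intro ws hws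
      have h2 := hws t le_rfl
      have hid : (fun i : Fin t => ws (Fin.castLE le_rfl i)) = ws := by
        funext i; congr
      rwa [hid] at h2
    set H1 : (Fin t → (Fin q → ℝ)) × (Fin q → ℝ) → ℝ :=
      fun z => if z.1 ∈ B then V (f (φ t z.1) (π (φ t z.1)) (pr z.2)) else 0 with hH1def
    have hfcomp_meas : Measurable fun z : (Fin t → (Fin q → ℝ)) × (Fin q → ℝ) =>
        f (φ t z.1) (π (φ t z.1)) (pr z.2) := by
      have h1 : Measurable fun z : (Fin t → (Fin q → ℝ)) × (Fin q → ℝ) => φ t z.1 :=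
        (hφmeas t).comp measurable_fst
      exact hf.comp (h1.prodMk ((hπ.comp h1).prodMk (hprmeas.comp measurable_snd)))
    have hH1meas : Measurable H1 := by
      refine Measurable.ite (hBmeas.preimage measurable_fst) ?_ measurable_const
      exact measurable_comp_of_continuousOn hVcont hfcomp_meas
        (fun z => hinv _ (hφmem t _) _ (hprS _))
    have hH1bdd : ∀ z, ‖H1 z‖ ≤ C := by
      intro z
      simp only [hH1def]
      by_cases h : z.1 ∈ B
      · rw [if_pos h]; exact hC _ (hinv _ (hφmem t _) _ (hprS _))
      · rw [if_neg h]; simpa using hC0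
    have hH1int : Integrable H1 ((μ.map P).prod d) :=
      (integrable_const C).mono' hH1meas.aestronglyMeasurable
        (Filter.Eventually.of_forall hH1bdd)
    set F2 : (Fin t → (Fin q → ℝ)) → ℝ :=
      fun ws => if ws ∈ B then V (φ t ws) - ε else 0 with hF2def
    have hF2meas : Measurable F2 :=
      Measurable.ite hBmeas
        ((measurable_comp_of_continuousOn hVcont (hφmeas t) (hφmem t)).sub measurable_const)
        measurable_const
    have hF2int : Integrable F2 (μ.map P) := by
      refine (integrable_const (C + |ε|)).mono' hF2meas.aestronglyMeasurable
        (Filter.Eventually.of_forall fun ws => ?_)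
      simp only [hF2def]
      by_cases h : ws ∈ B
      · rw [if_pos h]
        calc ‖V (φ t ws) - ε‖ ≤ ‖V (φ t ws)‖ + ‖ε‖ := norm_sub_le _ _
        _ ≤ C + |ε| := by
            have := hC _ (hφmem t ws)
            simp only [Real.norm_eq_abs] at *
            linarith
      · rw [if_neg h]
        simp only [norm_zero]
        positivity
    have hinner_le : ∀ ws, (∫ w, H1 (ws, w) ∂d) ≤ F2 ws := by
      intro ws
      by_cases h : ws ∈ B
      · have hx : φ t ws ∈ 𝒳 := hφmem t ws
        have h2 : ∫ w, H1 (ws, w) ∂d = ∫ w, V (f (φ t ws) (π (φ t ws)) (pr w)) ∂d := by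
          refine integral_congr_ae (Filter.Eventually.of_forall fun w => ?_)
          simp only [hH1def, if_pos h]
        have h3 : ∫ w, V (f (φ t ws) (π (φ t ws)) (pr w)) ∂d
            = ∫ w, V (f (φ t ws) (π (φ t ws)) w) ∂d := by
          refine integral_congr_ae ?_
          filter_upwards [hdae] with w hw
          rw [hprid w hw]
        have h4 := hVdec (φ t ws) ⟨hx, (hBt ws h).1⟩ (le_of_lt (hBt ws h).2)
        simp only [hF2def, if_pos h]
        rw [h2, h3]
        exact h4
      · have h5 : ∀ w, H1 (ws, w) = 0 := fun w => by simp only [hH1def, if_neg h]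
        simp only [hF2def, if_neg h, funext h5, integral_zero]
        exact le_refl 0
    have hinnerint : Integrable (fun ws => ∫ w, H1 (ws, w) ∂d) (μ.map P) :=
      hH1int.integral_prod_left
    have step1 : ∫ ϖ, (N t).indicator (fun ϖ => V (tr (t+1) ϖ)) ϖ ∂μ
        = ∫ ϖ, H1 (P ϖ, ω t ϖ) ∂μ := by
      refine integral_congr_ae (Filter.Eventually.of_forall fun ϖ => ?_)
      by_cases h : ϖ ∈ N t
      · rw [Set.indicator_of_mem h]
        simp only [hH1def, if_pos ((hmemB ϖ).mpr h)]
        rw [htrsucc t ϖ, htrphi t ϖ]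
      · rw [Set.indicator_of_notMem h]
        simp only [hH1def, if_neg (fun hb => h ((hmemB ϖ).mp hb))]
    have step2 : ∫ ϖ, H1 (P ϖ, ω t ϖ) ∂μ = ∫ z, H1 z ∂((μ.map P).prod d) := by
      rw [← hmap]
      exact (integral_map hpairmeas.aemeasurable hH1meas.aestronglyMeasurable).symm
    have step3 : ∫ z, H1 z ∂((μ.map P).prod d) = ∫ ws, (∫ w, H1 (ws, w) ∂d) ∂(μ.map P) :=
      integral_prod H1 hH1int
    have step4 : ∫ ws, (∫ w, H1 (ws, w) ∂d) ∂(μ.map P) ≤ ∫ ws, F2 ws ∂(μ.map P) :=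
      integral_mono hinnerint hF2int hinner_le
    have step5 : ∫ ws, F2 ws ∂(μ.map P) = ∫ ϖ, F2 (P ϖ) ∂μ :=
      integral_map hPmeas.aemeasurable hF2meas.aestronglyMeasurable
    have step6 : ∫ ϖ, F2 (P ϖ) ∂μ = ∫ ϖ, (N t).indicator (fun ϖ => V (tr t ϖ) - ε) ϖ ∂μ := by
      refine integral_congr_ae (Filter.Eventually.of_forall fun ϖ => ?_)
      by_cases h : ϖ ∈ N t
      · rw [Set.indicator_of_mem h]
        simp only [hF2def, if_pos ((hmemB ϖ).mpr h)]
        rw [htrphi t ϖ]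
      · rw [Set.indicator_of_notMem h]
        simp only [hF2def, if_neg (fun hb => h ((hmemB ϖ).mp hb))]
    linarith
  -- expected decrease
  have hdec : ∀ t, ∫ ϖ, Y (t+1) ϖ ∂μ ≤ (∫ ϖ, Y t ϖ ∂μ) - ε * (μ (N t)).toReal := by
    intro t
    have i1 : Integrable ((N t).indicator fun ϖ => V (tr (t+1) ϖ)) μ :=
      (hbdd_int _ C (hVtrmeas (t+1)) fun ϖ => hC _ (htrmem _ _)).indicator (hNmeas t)
    have i2 : Integrable ((N t)ᶜ.indicator (Y t)) μ := (hYint t).indicator (hNmeas t).compl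
    have i3 : Integrable ((N t).indicator (Y t)) μ := (hYint t).indicator (hNmeas t)
    have i5 : Integrable ((N t).indicator fun ϖ => V (tr t ϖ)) μ :=
      (hbdd_int _ C (hVtrmeas t) fun ϖ => hC _ (htrmem _ _)).indicator (hNmeas t)
    have i6 : Integrable ((N t).indicator fun _ => ε) μ :=
      (integrable_const ε).indicator (hNmeas t)
    have hd1 : Y (t+1) = fun ϖ => (N t).indicator (fun ϖ => V (tr (t+1) ϖ)) ϖ
        + (N t)ᶜ.indicator (Y t) ϖ := by
      funext ϖ
      by_cases h : ϖ ∈ N t <;> simp [hYsucc, h, Set.indicator]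
    have e1 : ∫ ϖ, Y (t+1) ϖ ∂μ = (∫ ϖ, (N t).indicator (fun ϖ => V (tr (t+1) ϖ)) ϖ ∂μ)
        + ∫ ϖ, (N t)ᶜ.indicator (Y t) ϖ ∂μ := by
      rw [hd1]; exact integral_add i1 i2
    have e2 : ∫ ϖ, Y t ϖ ∂μ = (∫ ϖ, (N t).indicator (Y t) ϖ ∂μ)
        + ∫ ϖ, (N t)ᶜ.indicator (Y t) ϖ ∂μ := by
      rw [← integral_add i3 i2]
      congr 1; funext ϖ
      by_cases h : ϖ ∈ N t <;> simp [Set.indicator, h]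
    have e3 : (N t).indicator (Y t) = (N t).indicator fun ϖ => V (tr t ϖ) := by
      funext ϖ
      by_cases h : ϖ ∈ N t <;> simp [Set.indicator, h, hYonN t ϖ]
    have e4 : ∫ ϖ, (N t).indicator (fun ϖ => V (tr t ϖ) - ε) ϖ ∂μ
        = (∫ ϖ, (N t).indicator (fun ϖ => V (tr t ϖ)) ϖ ∂μ) - ε * (μ (N t)).toReal := by
      have h7 : (N t).indicator (fun ϖ => V (tr t ϖ) - ε)
          = fun ϖ => (N t).indicator (fun ϖ => V (tr t ϖ)) ϖ - (N t).indicator (fun _ => ε) ϖ := by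
        funext ϖ
        by_cases h : ϖ ∈ N t <;> simp [Set.indicator, h]
      rw [h7, integral_sub i5 i6, integral_indicator_const _ (hNmeas t), smul_eq_mul, mul_comm]
      rfl
    have := hkey t
    rw [e4] at this
    rw [e1, e2, e3]
    linarith
  have hYint0 : ∫ ϖ, Y 0 ϖ ∂μ = V x₀ := by
    rw [funext hY0]; simp
  have hYintnonneg : ∀ t, 0 ≤ ∫ ϖ, Y t ϖ ∂μ := fun t =>
    integral_nonneg (hYnonneg t)
  have hYint1 : ∀ t, ∫ ϖ, Y t ϖ ∂μ ≤ 1 := by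
    intro t
    induction t with
    | zero => rw [hYint0]; exact hVinit _ hx₀
    | succ t ih =>
        have h2 : 0 ≤ ε * (μ (N t)).toReal := by positivity
        linarith [hdec t]
  have hNnull : μ (⋂ t, N t) = 0 := by
    set c := (μ (⋂ t, N t)).toReal with hcdef
    have hcle : ∀ t, c ≤ (μ (N t)).toReal := fun t =>
      ENNReal.toReal_mono (measure_ne_top μ _) (measure_mono (Set.iInter_subset N t))
    have hkeyT : ∀ T : ℕ, (∫ ϖ, Y T ϖ ∂μ) + T * (ε * c) ≤ 1 := by
      intro T
      induction T with
      | zero => simp [hYint0]; exact hVinit _ hx₀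
      | succ T ih =>
          have h1 := hdec T
          have h2 : ε * c ≤ ε * (μ (N T)).toReal :=
            mul_le_mul_of_nonneg_left (hcle T) hε.le
          have h3 : ((T + 1 : ℕ) : ℝ) * (ε * c) = (T : ℝ) * (ε * c) + ε * c := by
            push_cast; ring
          rw [h3]
          linarith
    by_contra hne
    have hcpos : 0 < c := ENNReal.toReal_pos hne (measure_ne_top μ _)
    obtain ⟨T, hT⟩ := exists_nat_gt (1 / (ε * c))
    have h1 : (T : ℝ) * (ε * c) ≤ 1 := by
      have := hkeyT T
      have := hYintnonneg T
      linarith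
    rw [div_lt_iff₀ (by positivity)] at hT
    linarith
  set A : ℕ → Set Ω := fun t => {ϖ | ∃ s ≤ t, (∀ r < s, tr r ϖ ∉ Xt ∧ V (tr r ϖ) < thr) ∧
      tr s ϖ ∉ Xt ∧ thr ≤ V (tr s ϖ)} with hAdef
  have hAmeas : ∀ t, MeasurableSet (A t) := by
    intro t
    have : A t = ⋃ (s : ℕ) (_ : s ≤ t),
        ((⋂ (r : ℕ) (_ : r < s), ((tr r ⁻¹' Xt)ᶜ ∩ {ϖ | V (tr r ϖ) < thr})) ∩
         ((tr s ⁻¹' Xt)ᶜ ∩ {ϖ | thr ≤ V (tr s ϖ)})) := by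
      ext ϖ
      simp only [hAdef, Set.mem_setOf_eq, Set.mem_iUnion, Set.mem_inter_iff, Set.mem_iInter,
        Set.mem_compl_iff, Set.mem_preimage]
      constructor
      · rintro ⟨s, hst, h1, h2, h3⟩; exact ⟨s, hst, h1, h2, h3⟩
      · rintro ⟨s, hst, h1, h2, h3⟩; exact ⟨s, hst, h1, h2, h3⟩
    rw [this]
    refine MeasurableSet.iUnion fun s => MeasurableSet.iUnion fun _ => ?_
    refine (MeasurableSet.iInter fun r => MeasurableSet.iInter fun _ => ?_).inter
      (((htrmeas s hXtmeas).compl).inter (measurableSet_le measurable_const (hVtrmeas s)))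
    exact ((htrmeas r hXtmeas).compl).inter (measurableSet_lt (hVtrmeas r) measurable_const)
  have hAbound : ∀ t, μ (A t) ≤ ENNReal.ofReal (1 - p) := by
    intro t
    have hYA : ∀ ϖ ∈ A t, thr ≤ Y t ϖ := by
      intro ϖ hϖ
      obtain ⟨s, hst, hpre, hnXt, hthrV⟩ := hϖ
      have hYs : ∀ u, s ≤ u → Y u ϖ = V (tr s ϖ) := by
        intro u hu
        induction u, hu using Nat.le_induction with
        | base =>
            cases s with
            | zero => simp [hYdef, rasmY]
            | succ r =>
                rw [hYsucc, if_pos]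
                intro r' hr'
                exact hpre r' (Nat.lt_succ_of_le hr')
        | succ u hsu ih =>
            rw [hYsucc, if_neg, ih]
            intro hmem
            exact absurd (hmem s hsu).2 (not_lt.mpr hthrV)
      rw [hYs t hst]
      exact hthrV
    have hmarkov : thr * (μ (A t)).toReal ≤ ∫ ϖ, Y t ϖ ∂μ := by
      have hind : ∀ ϖ, (A t).indicator (fun _ => thr) ϖ ≤ Y t ϖ := by
        intro ϖ
        by_cases h : ϖ ∈ A t
        · simpa [Set.indicator, h] using hYA ϖ h
        · simpa [Set.indicator, h] using hYnonneg t ϖ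
      have := integral_mono ((integrable_const thr).indicator (hAmeas t)) (hYint t) hind
      rwa [integral_indicator_const _ (hAmeas t), smul_eq_mul, mul_comm] at this
    have htoReal : (μ (A t)).toReal ≤ 1 - p := by
      have h1 : thr * (μ (A t)).toReal ≤ 1 := hmarkov.trans (hYint1 t)
      have h2 : (μ (A t)).toReal ≤ 1 / thr := by
        rw [le_div_iff₀ hthrpos]
        linarith
      rwa [hthrdef, one_div_one_div] at h2
    rw [← ENNReal.ofReal_toReal (measure_ne_top μ (A t))]
    exact ENNReal.ofReal_le_ofReal htoReal
  have hAUnion : μ (⋃ t, A t) ≤ ENNReal.ofReal (1 - p) := by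
    have hmono : Monotone A := by
      intro s t hst ϖ hϖ
      obtain ⟨r, hr, h⟩ := hϖ
      exact ⟨r, hr.trans hst, h⟩
    rw [hmono.directed_le.measure_iUnion]
    exact iSup_le hAbound
  -- put it together
  set G : Set Ω := {ϖ | ∀ t, ω t ϖ ∈ S} with hGdef
  have hGc : μ Gᶜ = 0 := by
    have hsub : Gᶜ ⊆ ⋃ t, (ω t) ⁻¹' Sᶜ := by
      intro ϖ hϖ
      simp only [hGdef, Set.mem_compl_iff, Set.mem_setOf_eq, not_forall] at hϖ
      obtain ⟨t, ht⟩ := hϖ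
      exact Set.mem_iUnion.mpr ⟨t, ht⟩
    refine measure_mono_null hsub (measure_iUnion_null fun t => ?_)
    have h1 := Measure.map_apply (μ := μ) (hωmeas t) hSm.compl
    rw [hωlaw t] at h1
    rw [← h1]
    exact hSc0
  have htrG : ∀ ϖ ∈ G, ∀ t, traj t ϖ = tr t ϖ := by
    intro ϖ hϖ t
    induction t with
    | zero => rw [htraj0]; rfl
    | succ t ih =>
        rw [htraj, ih]
        show _ = f _ (π _) (pr (ω t ϖ))
        rw [hprid _ (hϖ t)]
  have hGae : ∀ᵐ ϖ ∂μ, ϖ ∈ G := by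
    rw [MeasureTheory.ae_iff]
    exact hGc
  set E' : Set Ω := {ϖ | ∃ t, tr t ϖ ∈ Xt ∧ ∀ t' ≤ t, tr t' ϖ ∉ Xu} with hE'def
  have hEE' : μ {ϖ | ∃ t : ℕ, traj t ϖ ∈ Xt ∧ ∀ t' ≤ t, traj t' ϖ ∉ Xu} = μ E' := by
    apply measure_congr
    rw [Filter.eventuallyEq_set]
    filter_upwards [hGae] with ϖ hϖ
    have hall := htrG ϖ hϖ
    simp only [Set.mem_setOf_eq, hE'def, hall]
  have hE'meas : MeasurableSet E' := by
    have : E' = ⋃ t, ((tr t ⁻¹' Xt) ∩ ⋂ (t' : ℕ) (_ : t' ≤ t), (tr t' ⁻¹' Xu)ᶜ) := by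
      ext ϖ
      simp only [hE'def, Set.mem_setOf_eq, Set.mem_iUnion, Set.mem_inter_iff, Set.mem_iInter,
        Set.mem_compl_iff, Set.mem_preimage]
    rw [this]
    exact MeasurableSet.iUnion fun t => (htrmeas t hXtmeas).inter
      (MeasurableSet.iInter fun t' => MeasurableSet.iInter fun _ => (htrmeas t' hXumeas).compl)
  have hcompl : E'ᶜ ⊆ (⋂ t, N t) ∪ ⋃ t, A t := by
    intro ϖ hϖ
    by_cases hN' : ϖ ∈ ⋂ t, N t
    · exact Or.inl hN'
    right
    have hex : ∃ s, ¬ (tr s ϖ ∉ Xt ∧ V (tr s ϖ) < thr) := by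
      simp only [Set.mem_iInter] at hN'
      push_neg at hN'
      obtain ⟨t, ht⟩ := hN'
      simp only [hNdef, Set.mem_setOf_eq, not_forall] at ht
      obtain ⟨s, hst, hs⟩ := ht
      exact ⟨s, hs⟩
    have hspec := Nat.find_spec hex
    have hmin : ∀ r < Nat.find hex, tr r ϖ ∉ Xt ∧ V (tr r ϖ) < thr := fun r hr =>
      not_not.mp (Nat.find_min hex hr)
    by_cases hXt' : tr (Nat.find hex) ϖ ∈ Xt
    · exfalso
      apply hϖ
      refine ⟨Nat.find hex, hXt', fun t' ht' => ?_⟩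
      rcases lt_or_eq_of_le ht' with h | h
      · intro hu
        exact absurd (hVunsafe _ hu) (not_le.mpr (hmin t' h).2)
      · subst h
        exact fun hu => Set.disjoint_left.mp hdisj hXt' hu
    · have hthrV : thr ≤ V (tr (Nat.find hex) ϖ) := by
        by_contra h
        exact hspec ⟨hXt', not_le.mp h⟩
      exact Set.mem_iUnion.mpr ⟨Nat.find hex, Nat.find hex, le_rfl, hmin, hXt', hthrV⟩
  have hfinal : μ E'ᶜ ≤ ENNReal.ofReal (1 - p) := by
    calc μ E'ᶜ ≤ μ ((⋂ t, N t) ∪ ⋃ t, A t) := measure_mono hcompl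
    _ ≤ μ (⋂ t, N t) + μ (⋃ t, A t) := measure_union_le _ _
    _ ≤ 0 + ENNReal.ofReal (1 - p) := add_le_add hNnull.le hAUnion
    _ = ENNReal.ofReal (1 - p) := zero_add _
  have hcompl_eq : μ E'ᶜ = 1 - μ E' := by
    rw [measure_compl hE'meas (measure_ne_top μ _), measure_univ]
  rw [hcompl_eq] at hfinal
  have h1 : (1 : ENNReal) ≤ ENNReal.ofReal (1 - p) + μ E' := tsub_le_iff_right.mp hfinal
  have hsum : ENNReal.ofReal p + ENNReal.ofReal (1 - p) = 1 := by
    rw [← ENNReal.ofReal_add hp0 (by linarith)]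
    norm_num
  rw [hEE']
  have h2 : ENNReal.ofReal p + ENNReal.ofReal (1 - p) ≤ μ E' + ENNReal.ofReal (1 - p) := by
    rw [hsum, add_comm (μ E')]
    exact h1
  exact (ENNReal.add_le_add_iff_right ENNReal.ofReal_ne_top).mp h2
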